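/- Let Λ be a real random variable whose CDF F is r-times continuously differentiable in a neighborhood of 0 with F(0) = τ, and let Ĩ' be a symmetric kernel of order r supported on [-1,1]. Then E[Ĩ(-Λ/h) - τ] = O(h^r) as h → 0⁺; more precisely it equals (h^r/r!)(∫_{-1}^{1} v^r Ĩ'(v) dv) f^{(r-1)}(0) + O(h^{r+1}), where f = F'. -/

import Mathlib

open MeasureTheory Filter Asymptotics
open scoped ENNReal

section helpers

lemma iterDW_open {f : ℝ → ℝ} {U : Set ℝ} (hU : IsOpen U) {x : ℝ} (hx : x ∈ U) (n : ℕ) :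
    iteratedDerivWithin n f U x = iteratedDeriv n f x := by
  rw [iteratedDerivWithin, iteratedDeriv, iteratedFDerivWithin_of_isOpen n hU hx]

lemma iterDW_eq {f : ℝ → ℝ} {U s : Set ℝ} {n : ℕ}
    (hU : IsOpen U) (hf : ContDiffOn ℝ n f U) (hsU : s ⊆ U) (hs : UniqueDiffOn ℝ s) :
    ∀ k : ℕ, k ≤ n → ∀ x ∈ s, iteratedDerivWithin k f s x = iteratedDeriv k f x := by
  intro k
  induction k with
  | zero => intro _ x hx; simp
  | succ k ih =>
    intro hkn x hx
    have hk : k ≤ n := Nat.le_of_succ_le hkn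
    have hdiff : DifferentiableAt ℝ (iteratedDeriv k f) x := by
      have h1 : DifferentiableOn ℝ (iteratedDerivWithin k f U) U :=
        hf.differentiableOn_iteratedDerivWithin (by exact_mod_cast Nat.lt_of_succ_le hkn)
          hU.uniqueDiffOn
      have h2 : DifferentiableAt ℝ (iteratedDerivWithin k f U) x :=
        (h1 x (hsU hx)).differentiableAt (hU.mem_nhds (hsU hx))
      refine h2.congr_of_eventuallyEq ?_
      filter_upwards [hU.mem_nhds (hsU hx)] with z hz
      exact (iterDW_open hU hz k).symm
    have hu : UniqueDiffWithinAt ℝ s x := hs x hx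
    rw [iteratedDerivWithin_succ,
      derivWithin_congr (fun y hy => ih hk y hy) (ih hk x hx),
      hdiff.derivWithin hu, ← iteratedDeriv_succ]

lemma taylor_bound_right {f : ℝ → ℝ} {b C : ℝ} {n : ℕ}
    (hb : 0 < b) {U : Set ℝ} (hU : IsOpen U) (hsub : Set.Icc 0 b ⊆ U)
    (hf : ContDiffOn ℝ (n + 1) f U)
    (hC : ∀ y ∈ Set.Icc (0:ℝ) b, |iteratedDeriv (n + 1) f y| ≤ C)
    {x : ℝ} (hx : x ∈ Set.Icc (0:ℝ) b) :
    |f x - ∑ k ∈ Finset.range (n + 1), (k.factorial : ℝ)⁻¹ * x ^ k * iteratedDeriv k f 0| ≤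
      C * x ^ (n + 1) / n.factorial := by
  have huniq := uniqueDiffOn_Icc hb
  have heq : ∀ k, k ≤ n + 1 → ∀ y ∈ Set.Icc (0:ℝ) b,
      iteratedDerivWithin k f (Set.Icc 0 b) y = iteratedDeriv k f y :=
    iterDW_eq hU hf hsub huniq
  have hmain := taylor_mean_remainder_bound (f := f) (a := 0) (b := b) (n := n) hb.le
      (hf.mono hsub) hx (fun y hy => by
        rw [Real.norm_eq_abs, heq (n+1) le_rfl y hy]; exact hC y hy)
  rw [taylor_within_apply] at hmain
  have hsum : (∑ k ∈ Finset.range (n + 1),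
        ((k.factorial : ℝ)⁻¹ * (x - 0) ^ k) • iteratedDerivWithin k f (Set.Icc 0 b) 0)
      = ∑ k ∈ Finset.range (n + 1), (k.factorial : ℝ)⁻¹ * x ^ k * iteratedDeriv k f 0 := by
    refine Finset.sum_congr rfl fun k hk => ?_
    rw [heq k (Nat.le_of_lt_succ (Finset.mem_range.mp hk) |>.trans (Nat.le_succ n)) 0
      ⟨le_refl 0, hb.le⟩, smul_eq_mul, sub_zero]
  rw [hsum] at hmain
  simpa [Real.norm_eq_abs, sub_zero] using hmain

lemma taylor_bound_two {f : ℝ → ℝ} {b C : ℝ} {n : ℕ} {U : Set ℝ}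
    (hb : 0 < b) (hU : IsOpen U) (hsub : Set.Icc (-b) b ⊆ U) (hsym : ∀ y ∈ U, -y ∈ U)
    (hf : ContDiffOn ℝ (n + 1) f U)
    (hC : ∀ y ∈ Set.Icc (-b) b, |iteratedDeriv (n + 1) f y| ≤ C)
    {x : ℝ} (hx : x ∈ Set.Icc (-b) b) :
    |f x - ∑ k ∈ Finset.range (n + 1), (k.factorial : ℝ)⁻¹ * x ^ k * iteratedDeriv k f 0| ≤
      C * |x| ^ (n + 1) / n.factorial := by
  rcases le_or_gt 0 x with hx0 | hx0
  · have := taylor_bound_right hb hU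
      (fun y hy => hsub ⟨by linarith [hy.1], hy.2⟩) hf
      (fun y hy => hC y ⟨by linarith [hy.1], hy.2⟩) (x := x) ⟨hx0, hx.2⟩
    rwa [abs_of_nonneg hx0]
  · set g : ℝ → ℝ := fun t => f (-t) with hg
    have hgU : ContDiffOn ℝ (n + 1) g U := by
      refine hf.comp (contDiff_neg.contDiffOn) ?_
      intro y hy; exact hsym y hy
    have hgd : ∀ k t, iteratedDeriv k g t = (-1 : ℝ) ^ k * iteratedDeriv k f (-t) := by
      intro k t
      simpa [smul_eq_mul] using iteratedDeriv_comp_neg k f t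
    have hgC : ∀ y ∈ Set.Icc (0:ℝ) b, |iteratedDeriv (n + 1) g y| ≤ C := by
      intro y hy
      rw [hgd, abs_mul, abs_pow, abs_neg, abs_one, one_pow, one_mul]
      exact hC (-y) ⟨by linarith [hy.2], by linarith [hy.1]⟩
    have hnx : -x ∈ Set.Icc (0:ℝ) b := ⟨by linarith, by linarith [hx.1]⟩
    have := taylor_bound_right hb hU (fun y hy => hsub ⟨by linarith [hy.1], hy.2⟩)
      hgU hgC hnx
    have hgx : g (-x) = f x := by simp [hg]
    have hsum : ∑ k ∈ Finset.range (n + 1), (k.factorial : ℝ)⁻¹ * (-x) ^ k * iteratedDeriv k g 0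
        = ∑ k ∈ Finset.range (n + 1), (k.factorial : ℝ)⁻¹ * x ^ k * iteratedDeriv k f 0 := by
      refine Finset.sum_congr rfl fun k _ => ?_
      rw [hgd, neg_zero]
      have h1 : ((-1:ℝ) ^ k) * ((-1:ℝ) ^ k) = 1 := by rw [← mul_pow]; norm_num
      linear_combination ((k.factorial : ℝ)⁻¹ * x ^ k * iteratedDeriv k f 0) * h1
    rw [hgx, hsum] at this
    rw [abs_of_neg hx0]
    exact this

end helpers

/-- Smoothing-bias expansion: with an order-r kernel and an r-times continuously
differentiable CDF near 0 with F(0)=τ, the smoothed moment bias satisfies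
E[Ĩ(-Λ/h)] - τ = (h^r/r!)(∫ v^r Ĩ'(v) dv) f^{(r-1)}(0) + O(h^{r+1}) as h → 0⁺. -/
theorem stmt_9 {Ω : Type*} [MeasurableSpace Ω] (μ : Measure Ω) [IsProbabilityMeasure μ]
    (Λ : Ω → ℝ) (hΛ : Measurable Λ)
    (r : ℕ) (hr : 1 ≤ r)
    (K : ℝ → ℝ) (hKmeas : Measurable K)
    (MK : ℝ) (hKbdd : ∀ u, |K u| ≤ MK)
    (hKsupp : ∀ u, u ∉ Set.Icc (-1:ℝ) 1 → K u = 0)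
    (hKsym : ∀ u, K (-u) = K u)
    (hK1 : ∫ v in (-1:ℝ)..1, K v = 1)
    (hKmom : ∀ k : ℕ, 1 ≤ k → k < r → ∫ v in (-1:ℝ)..1, v^k * K v = 0)
    (It : ℝ → ℝ) (hIt : ∀ u, It u = ∫ v in (-1:ℝ)..u, K v)
    (τ : ℝ) (F : ℝ → ℝ) (hF : ∀ x, F x = (μ {ω | Λ ω ≤ x}).toReal)
    (hF0 : F 0 = τ)
    (ε : ℝ) (hε : 0 < ε) (hFdiff : ContDiffOn ℝ (r+1 : ℕ) F (Set.Ioo (-ε) ε)) :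
    (fun h : ℝ =>
        (∫ ω, It (-(Λ ω) / h) ∂μ) - τ -
          (h ^ r / (Nat.factorial r : ℝ)) * (∫ v in (-1:ℝ)..1, v ^ r * K v) *
            iteratedDeriv r F 0)
      =O[nhdsWithin 0 (Set.Ioi 0)] (fun h => h ^ (r + 1)) := by
  have hMK0 : 0 ≤ MK := le_trans (abs_nonneg _) (hKbdd 0)
  -- basic properties of F
  have hFmono : Monotone F := by
    intro x y hxy
    rw [hF x, hF y]
    exact ENNReal.toReal_mono (measure_ne_top μ _)
      (measure_mono fun ω hω => le_trans hω hxy)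
  have hFmeas : Measurable F := hFmono.measurable
  have hFbd : ∀ x, |F x| ≤ 1 := by
    intro x
    rw [hF x, abs_of_nonneg ENNReal.toReal_nonneg]
    calc (μ {ω | Λ ω ≤ x}).toReal ≤ (1 : ℝ≥0∞).toReal :=
          ENNReal.toReal_mono (by simp) prob_le_one
      _ = 1 := by simp
  -- integrability helpers
  have hKintOn : ∀ a c : ℝ, IntegrableOn K (Set.Ioc a c) := by
    intro a c
    refine Integrable.mono' (g := fun _ => MK)
      (integrableOn_const measure_Ioc_lt_top.ne enorm_ne_top)
      hKmeas.aestronglyMeasurable.restrict ?_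
    exact Filter.Eventually.of_forall fun v => by
      rw [Real.norm_eq_abs]; exact hKbdd v
  have hII : ∀ φ : ℝ → ℝ, Measurable φ → ∀ B : ℝ, (∀ v ∈ Set.Icc (-1:ℝ) 1, |φ v| ≤ B) →
      IntervalIntegrable (fun v => K v * φ v) volume (-1) 1 := by
    intro φ hφm B hB
    rw [intervalIntegrable_iff, Set.uIoc_of_le (by norm_num : (-1:ℝ) ≤ 1)]
    refine Integrable.mono' (g := fun _ => MK * B)
      (integrableOn_const measure_Ioc_lt_top.ne enorm_ne_top)
      (hKmeas.mul hφm).aestronglyMeasurable.restrict ?_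
    rw [MeasureTheory.ae_restrict_iff' measurableSet_Ioc]
    refine Filter.Eventually.of_forall fun v hv => ?_
    rw [Real.norm_eq_abs, abs_mul]
    exact mul_le_mul (hKbdd v) (hB v ⟨hv.1.le, hv.2⟩) (abs_nonneg _) hMK0
  -- the key identity: for h > 0, the smoothed expectation is a kernel average of F
  have key : ∀ h : ℝ, 0 < h →
      (∫ ω, It (-(Λ ω) / h) ∂μ) = ∫ v in (-1:ℝ)..1, K v * F (h * v) := by
    intro h hh
    -- rewrite It as a set integral with an indicator
    have hIt2 : ∀ u : ℝ, It u = ∫ v in Set.Ioc (-1:ℝ) 1, (if v ≤ u then K v else 0) := by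
      intro u
      rw [hIt u]
      rcases le_or_gt u (-1) with hu | hu
      · rw [intervalIntegral.integral_of_ge hu]
        have hne : ∀ᵐ v : ℝ ∂volume, v ≠ (-1:ℝ) := by
          rw [Filter.eventually_iff, MeasureTheory.mem_ae_iff]
          have : {v : ℝ | v ≠ -1}ᶜ = {(-1:ℝ)} := by ext v; simp
          rw [this]
          exact Real.volume_singleton
        have h2 : ∫ v in Set.Ioc u (-1:ℝ), K v = 0 := by
          rw [MeasureTheory.setIntegral_congr_ae measurableSet_Ioc
            (g := fun _ => (0:ℝ)) ?_, integral_zero]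
          filter_upwards [hne] with v hv hmem
          exact hKsupp v (fun hIcc => hv (le_antisymm hmem.2 hIcc.1))
        have h3 : ∫ v in Set.Ioc (-1:ℝ) 1, (if v ≤ u then K v else 0) = 0 := by
          refine MeasureTheory.setIntegral_eq_zero_of_forall_eq_zero fun v hv => ?_
          rw [if_neg (by linarith [hv.1] : ¬ v ≤ u)]
        rw [h2, h3, neg_zero]
      rcases le_or_gt u 1 with hu1 | hu1
      · rw [intervalIntegral.integral_of_le hu.le]
        have hset : Set.Ioc (-1:ℝ) u = Set.Ioc (-1:ℝ) 1 ∩ Set.Iic u := by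
          ext v
          simp only [Set.mem_Ioc, Set.mem_inter_iff, Set.mem_Iic]
          constructor
          · rintro ⟨h1, h2⟩; exact ⟨⟨h1, h2.trans hu1⟩, h2⟩
          · rintro ⟨⟨h1, _⟩, h2⟩; exact ⟨h1, h2⟩
        have hind : ∀ v : ℝ, (if v ≤ u then K v else 0) = (Set.Iic u).indicator K v := by
          intro v; simp [Set.indicator_apply]
        rw [hset, ← MeasureTheory.setIntegral_indicator measurableSet_Iic]
        exact (MeasureTheory.setIntegral_congr_fun measurableSet_Ioc
          fun v _ => (hind v).symm).symm ▸ rfl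
      · rw [intervalIntegral.integral_of_le (by linarith : (-1:ℝ) ≤ u),
          (Set.Ioc_union_Ioc_eq_Ioc (by norm_num : (-1:ℝ) ≤ 1) hu1.le).symm,
          MeasureTheory.setIntegral_union (Set.Ioc_disjoint_Ioc_of_le le_rfl) measurableSet_Ioc
            (hKintOn _ _) (hKintOn _ _)]
        have h2 : ∫ v in Set.Ioc (1:ℝ) u, K v = 0 :=
          MeasureTheory.setIntegral_eq_zero_of_forall_eq_zero fun v hv =>
            hKsupp v (fun hIcc => absurd hIcc.2 (not_le.mpr hv.1))
        have h3 : ∫ v in Set.Ioc (-1:ℝ) 1, (if v ≤ u then K v else 0)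
            = ∫ v in Set.Ioc (-1:ℝ) 1, K v :=
          MeasureTheory.setIntegral_congr_fun measurableSet_Ioc fun v hv =>
            if_pos (hv.2.trans hu1.le)
        rw [h2, add_zero, h3]
    -- rewrite each It value with condition in terms of Λ
    have hIt3 : ∀ ω : Ω, It (-(Λ ω) / h)
        = ∫ v in Set.Ioc (-1:ℝ) 1, (if Λ ω ≤ -(h * v) then K v else 0) := by
      intro ω
      rw [hIt2]
      refine MeasureTheory.setIntegral_congr_fun measurableSet_Ioc fun v _ => ?_
      have hiff : (v ≤ -(Λ ω) / h) ↔ (Λ ω ≤ -(h * v)) := by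
        rw [le_div_iff₀ hh]
        constructor <;> intro <;> nlinarith
      exact if_congr hiff rfl rfl
    -- Fubini
    haveI : IsFiniteMeasure (volume.restrict (Set.Ioc (-1:ℝ) 1)) :=
      ⟨by rw [Measure.restrict_apply_univ]; exact measure_Ioc_lt_top⟩
    have hset : MeasurableSet {p : Ω × ℝ | Λ p.1 ≤ -(h * p.2)} :=
      measurableSet_le (hΛ.comp measurable_fst)
        ((measurable_const.mul measurable_snd).neg)
    have hvmeas : Measurable fun p : Ω × ℝ => if Λ p.1 ≤ -(h * p.2) then K p.2 else 0 :=
      Measurable.ite hset (hKmeas.comp measurable_snd) measurable_const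
    have hint : Integrable (Function.uncurry fun ω v => if Λ ω ≤ -(h * v) then K v else 0)
        (μ.prod (volume.restrict (Set.Ioc (-1:ℝ) 1))) := by
      refine Integrable.mono' (integrable_const MK) hvmeas.aestronglyMeasurable ?_
      refine Filter.Eventually.of_forall fun p => ?_
      rcases p with ⟨ω, v⟩
      rw [Real.norm_eq_abs, Function.uncurry_apply_pair]
      split
      · exact hKbdd _
      · simpa using hMK0
    have hswap := MeasureTheory.integral_integral_swap hint
    have hinner : ∀ v : ℝ, ∫ ω, (if Λ ω ≤ -(h * v) then K v else 0) ∂μ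
        = K v * F (-(h * v)) := by
      intro v
      have heq : (fun ω => if Λ ω ≤ -(h * v) then K v else 0)
          = Set.indicator {ω | Λ ω ≤ -(h * v)} (fun _ => K v) := by
        funext ω
        simp only [Set.indicator_apply, Set.mem_setOf_eq]
      rw [heq, MeasureTheory.integral_indicator (measurableSet_le hΛ measurable_const),
        MeasureTheory.setIntegral_const, hF, smul_eq_mul, mul_comm, measureReal_def]
    calc (∫ ω, It (-(Λ ω) / h) ∂μ)
        = ∫ ω, (∫ v in Set.Ioc (-1:ℝ) 1, (if Λ ω ≤ -(h * v) then K v else 0)) ∂μ := by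
          exact integral_congr_ae (Filter.Eventually.of_forall fun ω => hIt3 ω)
      _ = ∫ v in Set.Ioc (-1:ℝ) 1, (∫ ω, (if Λ ω ≤ -(h * v) then K v else 0) ∂μ) := hswap
      _ = ∫ v in Set.Ioc (-1:ℝ) 1, K v * F (-(h * v)) :=
          MeasureTheory.setIntegral_congr_fun measurableSet_Ioc fun v _ => hinner v
      _ = ∫ v in (-1:ℝ)..1, K v * F (-(h * v)) :=
          (intervalIntegral.integral_of_le (by norm_num)).symm
      _ = ∫ v in (-1:ℝ)..1, K v * F (h * v) := by
          have := intervalIntegral.integral_comp_neg (a := (-1:ℝ)) (b := 1)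
            (f := fun w => K w * F (h * w))
          simp only [neg_neg] at this
          rw [← this]
          refine intervalIntegral.integral_congr fun v _ => ?_
          rw [hKsym, mul_neg]
  -- radius for the Taylor estimate
  set b : ℝ := ε / 2 with hbdef
  have hbpos : 0 < b := by positivity
  have hsubU : Set.Icc (-b) b ⊆ Set.Ioo (-ε) ε := by
    intro y hy
    have h1 := hy.1; have h2 := hy.2
    constructor
    · simp only [hbdef] at h1; linarith
    · simp only [hbdef] at h2; linarith
  -- a bound on the (r+1)-st derivative of F near 0
  have hcont : ContinuousOn (iteratedDeriv (r + 1) F) (Set.Icc (-b) b) := by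
    have h1 : ContinuousOn (iteratedDerivWithin (r + 1) F (Set.Ioo (-ε) ε)) (Set.Ioo (-ε) ε) :=
      hFdiff.continuousOn_iteratedDerivWithin (by exact_mod_cast le_rfl)
        isOpen_Ioo.uniqueDiffOn
    exact (h1.congr fun y hy => (iterDW_open isOpen_Ioo hy (r + 1)).symm).mono hsubU
  obtain ⟨C, hCbd⟩ : ∃ C, ∀ y ∈ Set.Icc (-b) b, |iteratedDeriv (r + 1) F y| ≤ C := by
    obtain ⟨C, hC⟩ := isCompact_Icc.exists_bound_of_continuousOn hcont
    exact ⟨C, fun y hy => by simpa [Real.norm_eq_abs] using hC y hy⟩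
  have hC0 : 0 ≤ C := le_trans (abs_nonneg _) (hCbd 0 ⟨by linarith, by linarith⟩)
  -- evaluation of the kernel moments against the Taylor polynomial
  have hP : ∀ h : ℝ, (∫ v in (-1:ℝ)..1,
      K v * (∑ k ∈ Finset.range (r + 1), (k.factorial : ℝ)⁻¹ * (h * v) ^ k * iteratedDeriv k F 0))
      = τ + (h ^ r / (r.factorial : ℝ)) * (∫ v in (-1:ℝ)..1, v ^ r * K v) * iteratedDeriv r F 0 := by
    intro h
    have hterm : ∀ k : ℕ, IntervalIntegrable
        (fun v => K v * ((k.factorial : ℝ)⁻¹ * (h * v) ^ k * iteratedDeriv k F 0))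
        volume (-1) 1 := by
      intro k
      refine hII _ (by fun_prop) ((k.factorial : ℝ)⁻¹ * |h| ^ k * |iteratedDeriv k F 0|) ?_
      intro v hv
      have h1 : |v| ≤ 1 := abs_le.mpr ⟨hv.1, hv.2⟩
      calc |(k.factorial : ℝ)⁻¹ * (h * v) ^ k * iteratedDeriv k F 0|
          = (k.factorial : ℝ)⁻¹ * |h * v| ^ k * |iteratedDeriv k F 0| := by
            rw [abs_mul, abs_mul, abs_pow, abs_inv, Nat.abs_cast]
        _ ≤ (k.factorial : ℝ)⁻¹ * |h| ^ k * |iteratedDeriv k F 0| := by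
            have hle : |h * v| ≤ |h| := by
              rw [abs_mul]
              calc |h| * |v| ≤ |h| * 1 := by gcongr
                _ = |h| := mul_one _
            have hpow : |h * v| ^ k ≤ |h| ^ k := pow_le_pow_left₀ (abs_nonneg _) hle k
            have h0 : (0:ℝ) ≤ (k.factorial : ℝ)⁻¹ := by positivity
            exact mul_le_mul_of_nonneg_right (mul_le_mul_of_nonneg_left hpow h0) (abs_nonneg _)
    have hmulsum : (fun v => K v *
          (∑ k ∈ Finset.range (r + 1), (k.factorial : ℝ)⁻¹ * (h * v) ^ k * iteratedDeriv k F 0))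
        = fun v => ∑ k ∈ Finset.range (r + 1),
            K v * ((k.factorial : ℝ)⁻¹ * (h * v) ^ k * iteratedDeriv k F 0) :=
      funext fun v => Finset.mul_sum _ _ _
    rw [hmulsum, intervalIntegral.integral_finset_sum (fun k _ => hterm k)]
    have heval : ∀ k ∈ Finset.range (r + 1),
        (∫ v in (-1:ℝ)..1, K v * ((k.factorial : ℝ)⁻¹ * (h * v) ^ k * iteratedDeriv k F 0))
        = (if k = 0 then τ else if k = r then
            (h ^ r / (r.factorial : ℝ)) * (∫ v in (-1:ℝ)..1, v ^ r * K v) *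
              iteratedDeriv r F 0 else 0) := by
      intro k hk
      have hconst : (∫ v in (-1:ℝ)..1, K v * ((k.factorial : ℝ)⁻¹ * (h * v) ^ k * iteratedDeriv k F 0))
          = ((k.factorial : ℝ)⁻¹ * h ^ k * iteratedDeriv k F 0) * ∫ v in (-1:ℝ)..1, v ^ k * K v := by
        rw [← intervalIntegral.integral_const_mul]
        refine intervalIntegral.integral_congr fun v _ => ?_
        ring
      rw [hconst]
      rcases eq_or_ne k 0 with rfl | hk0
      · rw [if_pos rfl]
        have h1 : (∫ v in (-1:ℝ)..1, v ^ (0:ℕ) * K v) = 1 := by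
          rw [show (∫ v in (-1:ℝ)..1, v ^ (0:ℕ) * K v) = ∫ v in (-1:ℝ)..1, K v from
            intervalIntegral.integral_congr fun v _ => by simp, hK1]
        rw [h1]
        simp [hF0]
      · rw [if_neg hk0]
        rcases eq_or_ne k r with rfl | hkr
        · rw [if_pos rfl]; ring
        · rw [if_neg hkr,
            hKmom k (Nat.one_le_iff_ne_zero.mpr hk0)
              (lt_of_le_of_ne (Nat.lt_succ_iff.mp (Finset.mem_range.mp hk)) hkr),
            mul_zero]
    rw [Finset.sum_congr rfl heval, Finset.sum_range_succ,
      if_neg (by omega : r ≠ 0), if_pos rfl]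
    have hsum0 : (∑ k ∈ Finset.range r, (if k = 0 then τ else if k = r then
        (h ^ r / (r.factorial : ℝ)) * (∫ v in (-1:ℝ)..1, v ^ r * K v) *
          iteratedDeriv r F 0 else 0)) = τ := by
      rw [Finset.sum_congr rfl (fun k hk => show _ = if k = 0 then τ else 0 by
        rcases eq_or_ne k 0 with rfl | h0
        · simp
        · rw [if_neg h0, if_neg (Nat.ne_of_lt (Finset.mem_range.mp hk)), if_neg h0])]
      rw [Finset.sum_ite_eq' (Finset.range r) 0 (fun _ => τ),
        if_pos (Finset.mem_range.mpr (by omega))]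
    rw [hsum0]
  -- final assembly
  rw [Asymptotics.isBigO_iff]
  refine ⟨2 * (MK * (C / r.factorial)), ?_⟩
  have hmem : Set.Ioo (0:ℝ) b ∈ nhdsWithin (0:ℝ) (Set.Ioi 0) :=
    Ioo_mem_nhdsGT_of_mem ⟨le_refl 0, hbpos⟩
  filter_upwards [hmem] with h hh
  obtain ⟨hh0, hhb⟩ := hh
  rw [key h hh0]
  set P : ℝ → ℝ := fun x => ∑ k ∈ Finset.range (r + 1),
    (k.factorial : ℝ)⁻¹ * x ^ k * iteratedDeriv k F 0 with hPdef
  have hIF : IntervalIntegrable (fun v => K v * F (h * v)) volume (-1) 1 :=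
    hII _ (hFmeas.comp (measurable_const.mul measurable_id)) 1 (fun v _ => hFbd _)
  have hIP : IntervalIntegrable (fun v => K v * P (h * v)) volume (-1) 1 := by
    refine hII _ (by fun_prop)
      (∑ k ∈ Finset.range (r + 1), (k.factorial : ℝ)⁻¹ * |h| ^ k * |iteratedDeriv k F 0|) ?_
    intro v hv
    have h1 : |v| ≤ 1 := abs_le.mpr ⟨hv.1, hv.2⟩
    simp only [hPdef]
    refine (Finset.abs_sum_le_sum_abs _ _).trans ?_
    refine Finset.sum_le_sum fun k _ => ?_
    calc |(k.factorial : ℝ)⁻¹ * (h * v) ^ k * iteratedDeriv k F 0|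
        = (k.factorial : ℝ)⁻¹ * |h * v| ^ k * |iteratedDeriv k F 0| := by
          rw [abs_mul, abs_mul, abs_pow, abs_inv, Nat.abs_cast]
      _ ≤ (k.factorial : ℝ)⁻¹ * |h| ^ k * |iteratedDeriv k F 0| := by
          have hle : |h * v| ≤ |h| := by
            rw [abs_mul]
            calc |h| * |v| ≤ |h| * 1 := by gcongr
              _ = |h| := mul_one _
          have hpow : |h * v| ^ k ≤ |h| ^ k := pow_le_pow_left₀ (abs_nonneg _) hle k
          have h0 : (0:ℝ) ≤ (k.factorial : ℝ)⁻¹ := by positivity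
          exact mul_le_mul_of_nonneg_right (mul_le_mul_of_nonneg_left hpow h0) (abs_nonneg _)
  have hPapp : (∫ v in (-1:ℝ)..1, K v * P (h * v))
      = τ + (h ^ r / (r.factorial : ℝ)) * (∫ v in (-1:ℝ)..1, v ^ r * K v) *
          iteratedDeriv r F 0 := hP h
  have hEq : (∫ v in (-1:ℝ)..1, K v * F (h * v)) - τ -
      (h ^ r / (r.factorial : ℝ)) * (∫ v in (-1:ℝ)..1, v ^ r * K v) * iteratedDeriv r F 0
      = ∫ v in (-1:ℝ)..1, K v * (F (h * v) - P (h * v)) := by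
    have h1 : (∫ v in (-1:ℝ)..1, K v * (F (h * v) - P (h * v)))
        = (∫ v in (-1:ℝ)..1, K v * F (h * v)) - ∫ v in (-1:ℝ)..1, K v * P (h * v) := by
      rw [← intervalIntegral.integral_sub hIF hIP]
      exact intervalIntegral.integral_congr fun v _ => by ring
    rw [h1, hPapp]
    ring
  rw [hEq]
  have hptwise : ∀ v ∈ Set.uIoc (-1:ℝ) 1,
      ‖K v * (F (h * v) - P (h * v))‖ ≤ MK * (C * h ^ (r + 1) / r.factorial) := by
    intro v hv
    rw [Set.uIoc_of_le (by norm_num : (-1:ℝ) ≤ 1)] at hv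
    have hv1 : |v| ≤ 1 := abs_le.mpr ⟨hv.1.le, hv.2⟩
    have habs : |h * v| ≤ h := by
      rw [abs_mul]
      calc |h| * |v| ≤ |h| * 1 := by gcongr
        _ = h := by rw [mul_one, abs_of_pos hh0]
    have hx : h * v ∈ Set.Icc (-b) b := by
      constructor
      · linarith [(abs_le.mp habs).1]
      · linarith [(abs_le.mp habs).2]
    have htay := taylor_bound_two hbpos isOpen_Ioo hsubU
      (fun y hy => ⟨by linarith [hy.2], by linarith [hy.1]⟩)
      (by exact_mod_cast hFdiff) hCbd hx
    rw [Real.norm_eq_abs, abs_mul]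
    have h3 : C * |h * v| ^ (r + 1) / r.factorial ≤ C * h ^ (r + 1) / r.factorial := by
      have hpow : |h * v| ^ (r + 1) ≤ h ^ (r + 1) := pow_le_pow_left₀ (abs_nonneg _) habs (r + 1)
      have hfac : (0:ℝ) < (r.factorial : ℝ) := by positivity
      exact (div_le_div_iff_of_pos_right hfac).mpr (mul_le_mul_of_nonneg_left hpow hC0)
    exact mul_le_mul (hKbdd v) (htay.trans h3) (abs_nonneg _) hMK0
  have hfinal := intervalIntegral.norm_integral_le_of_norm_le_const hptwise
  calc ‖∫ v in (-1:ℝ)..1, K v * (F (h * v) - P (h * v))‖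
      ≤ MK * (C * h ^ (r + 1) / r.factorial) * |1 - (-1:ℝ)| := hfinal
    _ = 2 * (MK * (C / r.factorial)) * h ^ (r + 1) := by
        rw [show |(1:ℝ) - (-1)| = 2 by norm_num]; ring
    _ = 2 * (MK * (C / r.factorial)) * ‖h ^ (r + 1)‖ := by
        rw [Real.norm_eq_abs, abs_of_pos (pow_pos hh0 _)]
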